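/- The unique minimizer τ(t) of F(τ; t, δ) over τ > 0 satisfies √(t/(δ - 1/2 + v)) ≤ τ(t) ≤ min{ √(t/(δ - 1/2)), √((4 + t)/δ) }, where v = ∫_{b}^∞ x² φ(x) dx with b = 2√((δ - 1/2)/t), and moreover v < 1/2. -/

import Mathlib

open Real Set MeasureTheory
open Filter

/-- standard normal density -/
noncomputable def stdPDF (x : ℝ) : ℝ := Real.exp (-x ^ 2 / 2) / Real.sqrt (2 * Real.pi)

/-- The objective F(τ; t, δ). -/
noncomputable def Fobj (δ t τ : ℝ) : ℝ :=
  τ / 2 * (δ - 1 / 2) + t / (2 * τ)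
    + τ / 2 * ∫ x in Set.Ioi (2 / τ), (x - 2 / τ) ^ 2 * stdPDF x

lemma stdPDF_eq : stdPDF = fun x => (Real.sqrt (2 * Real.pi))⁻¹ * Real.exp (-(1/2) * x ^ 2) := by
  funext x; unfold stdPDF; rw [div_eq_inv_mul]; ring_nf

lemma stdPDF_nonneg (x : ℝ) : 0 ≤ stdPDF x := div_nonneg (Real.exp_nonneg _) (Real.sqrt_nonneg _)

lemma stdPDF_pos (x : ℝ) : 0 < stdPDF x :=
  div_pos (Real.exp_pos _) (Real.sqrt_pos.2 (by positivity))

lemma continuous_stdPDF : Continuous stdPDF := by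
  unfold stdPDF
  exact (Real.continuous_exp.comp (by continuity)).div_const _

lemma integrable_stdPDF : Integrable stdPDF := by
  rw [stdPDF_eq]
  exact (integrable_exp_neg_mul_sq (by norm_num : (0:ℝ) < 1/2)).const_mul _

lemma integrable_sq_stdPDF : Integrable (fun x => x ^ 2 * stdPDF x) := by
  have h := (integrable_rpow_mul_exp_neg_mul_sq (by norm_num : (0:ℝ) < 1/2)
    (by norm_num : (-1:ℝ) < 2)).const_mul (Real.sqrt (2 * Real.pi))⁻¹
  refine h.congr ?_
  filter_upwards with x
  rw [stdPDF_eq]; rw [Real.rpow_two]; ring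

lemma integrable_id_stdPDF : Integrable (fun x => x * stdPDF x) := by
  have h := (integrable_mul_exp_neg_mul_sq (by norm_num : (0:ℝ) < 1/2)).const_mul
    (Real.sqrt (2 * Real.pi))⁻¹
  refine h.congr ?_
  filter_upwards with x
  rw [stdPDF_eq]; ring

lemma tendsto_mul_exp : Tendsto (fun x : ℝ => x * Real.exp (-(1/2) * x ^ 2)) atTop (nhds 0) := by
  have h := rpow_mul_exp_neg_mul_sq_isLittleO_exp_neg (b := 1/2) (by norm_num) 1
  have hlin : Tendsto (fun x : ℝ => -(1/2 : ℝ) * x) atTop atBot :=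
    (tendsto_const_mul_atBot_of_neg (by norm_num : (-(1/2):ℝ) < 0)).2 tendsto_id
  have h2 : Tendsto (fun x : ℝ => Real.exp (-(1/2 : ℝ) * x)) atTop (nhds 0) :=
    Real.tendsto_exp_atBot.comp hlin
  have := h.trans_tendsto (by simpa using h2)
  refine this.congr' ?_
  filter_upwards [eventually_gt_atTop (0:ℝ)] with x hx
  rw [Real.rpow_one]

lemma hasDerivAt_aux (x : ℝ) : HasDerivAt (fun y : ℝ => -y * Real.exp (-(1/2) * y ^ 2))
    ((x ^ 2 - 1) * Real.exp (-(1/2) * x ^ 2)) x := by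
  have h1 : HasDerivAt (fun y : ℝ => -(1/2 : ℝ) * y ^ 2) (-(1/2 : ℝ) * (2 * x)) x := by
    simpa using ((hasDerivAt_pow 2 x).const_mul (-(1/2:ℝ)))
  have h2 := h1.exp
  have h3 : HasDerivAt (fun y : ℝ => -y * Real.exp (-(1/2) * y ^ 2))
      (-1 * Real.exp (-(1/2) * x ^ 2) + -x * (Real.exp (-(1/2) * x ^ 2) * (-(1/2 : ℝ) * (2 * x)))) x :=
    ((hasDerivAt_id' x).neg).mul h2
  convert h3 using 1
  ring

lemma integrable_sq_exp : Integrable (fun x : ℝ => x ^ 2 * Real.exp (-(1/2) * x ^ 2)) := by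
  have := integrable_rpow_mul_exp_neg_mul_sq (by norm_num : (0:ℝ) < 1/2)
    (by norm_num : (-1:ℝ) < 2)
  refine this.congr ?_
  filter_upwards with x
  rw [Real.rpow_two]

lemma integral_Ioi_gauss (c : ℝ) :
    ∫ x in Ioi c, (x ^ 2 - 1) * Real.exp (-(1/2) * x ^ 2)
      = c * Real.exp (-(1/2) * c ^ 2) := by
  have h0 : Integrable (fun x : ℝ => Real.exp (-(1/2) * x ^ 2)) :=
    integrable_exp_neg_mul_sq (by norm_num)
  have hint : IntegrableOn (fun x : ℝ => (x ^ 2 - 1) * Real.exp (-(1/2) * x ^ 2)) (Ioi c) := by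
    refine ((integrable_sq_exp.sub h0).congr ?_).integrableOn
    filter_upwards with x
    simp only [Pi.sub_apply]
    ring
  have := integral_Ioi_of_hasDerivAt_of_tendsto' (f := fun y : ℝ => -y * Real.exp (-(1/2) * y ^ 2))
    (f' := fun x : ℝ => (x ^ 2 - 1) * Real.exp (-(1/2) * x ^ 2)) (a := c) (m := 0)
    (fun x _ => hasDerivAt_aux x) hint (by simpa using tendsto_mul_exp.neg)
  rw [this]; ring

lemma integral_Ioi_zero_stdPDF : ∫ x in Ioi (0:ℝ), stdPDF x = 1/2 := by
  rw [stdPDF_eq]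
  rw [integral_const_mul, integral_gaussian_Ioi]
  have h2 : Real.sqrt (π / (1/2)) = Real.sqrt (2 * π) := by norm_num [mul_comm]
  rw [h2, inv_mul_eq_div, div_div, div_eq_iff (by positivity)]
  ring

lemma integral_Ioi_zero_sq_stdPDF : ∫ x in Ioi (0:ℝ), x ^ 2 * stdPDF x = 1/2 := by
  have h2 : IntegrableOn (fun x : ℝ => x ^ 2 * Real.exp (-(1/2) * x ^ 2)) (Ioi (0:ℝ)) :=
    integrable_sq_exp.integrableOn
  have h0 : IntegrableOn (fun x : ℝ => Real.exp (-(1/2) * x ^ 2)) (Ioi (0:ℝ)) :=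
    (integrable_exp_neg_mul_sq (by norm_num)).integrableOn
  have hgz : ∫ x in Ioi (0:ℝ), (x ^ 2 - 1) * Real.exp (-(1/2) * x ^ 2) = 0 := by
    simpa using integral_Ioi_gauss 0
  have key : (∫ x in Ioi (0:ℝ), x ^ 2 * Real.exp (-(1/2) * x ^ 2))
      - ∫ x in Ioi (0:ℝ), Real.exp (-(1/2) * x ^ 2) = 0 := by
    rw [← MeasureTheory.integral_sub h2 h0]
    rw [show (∫ a in Ioi (0:ℝ), (a ^ 2 * Real.exp (-(1/2) * a ^ 2) - Real.exp (-(1/2) * a ^ 2)))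
        = ∫ x in Ioi (0:ℝ), (x ^ 2 - 1) * Real.exp (-(1/2) * x ^ 2) from
      setIntegral_congr_fun measurableSet_Ioi (fun x _ => by ring)]
    exact hgz
  have hgauss : ∫ x in Ioi (0:ℝ), Real.exp (-(1/2) * x ^ 2) = Real.sqrt (2*π) / 2 := by
    rw [integral_gaussian_Ioi]
    norm_num [mul_comm]
  have hval : ∫ x in Ioi (0:ℝ), x ^ 2 * Real.exp (-(1/2) * x ^ 2) = Real.sqrt (2*π) / 2 := by
    linarith [key, hgauss]
  calc ∫ x in Ioi (0:ℝ), x ^ 2 * stdPDF x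
      = (Real.sqrt (2*π))⁻¹ * ∫ x in Ioi (0:ℝ), x ^ 2 * Real.exp (-(1/2) * x ^ 2) := by
        rw [← integral_const_mul]
        apply setIntegral_congr_fun measurableSet_Ioi
        intro x _; rw [stdPDF_eq]; ring
    _ = 1/2 := by
        rw [hval, inv_mul_eq_div, div_div, div_eq_iff (by positivity)]
        ring

lemma integrable_shift_sq (c : ℝ) : Integrable (fun x => (x - c) ^ 2 * stdPDF x) := by
  have h : (fun x : ℝ => (x - c) ^ 2 * stdPDF x)
      = fun x => x ^ 2 * stdPDF x - (2 * c) * (x * stdPDF x) + c ^ 2 * stdPDF x := by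
    funext x; ring
  rw [h]
  exact (integrable_sq_stdPDF.sub (integrable_id_stdPDF.const_mul _)).add
    (integrable_stdPDF.const_mul _)

lemma integrable_sq_sub (c : ℝ) : Integrable (fun x => (x ^ 2 - c ^ 2) * stdPDF x) := by
  have h : (fun x : ℝ => (x ^ 2 - c ^ 2) * stdPDF x)
      = fun x => x ^ 2 * stdPDF x - c ^ 2 * stdPDF x := by funext x; ring
  rw [h]
  exact integrable_sq_stdPDF.sub (integrable_stdPDF.const_mul _)

lemma integrable_u (c : ℝ) : Integrable (fun x => max (x - c) 0 ^ 2 * stdPDF x) := by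
  refine Integrable.mono' (integrable_shift_sq c) ?_ ?_
  · exact ((((continuous_id.sub continuous_const).max continuous_const).pow 2).mul
      continuous_stdPDF).aestronglyMeasurable
  · filter_upwards with x
    rw [Real.norm_eq_abs, abs_of_nonneg (mul_nonneg (by positivity) (stdPDF_nonneg x))]
    apply mul_le_mul_of_nonneg_right _ (stdPDF_nonneg x)
    rcases le_or_gt (x - c) 0 with h | h
    · rw [max_eq_right h]
      simpa using sq_nonneg (x - c)
    · rw [max_eq_left h.le]

lemma T_eq {c : ℝ} (hc : 0 < c) :
    ∫ x in Ioi c, (x - c) ^ 2 * stdPDF x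
      = ∫ x in Ioi (0:ℝ), max (x - c) 0 ^ 2 * stdPDF x := by
  have hsplit : Ioc (0:ℝ) c ∪ Ioi c = Ioi 0 := Ioc_union_Ioi_eq_Ioi hc.le
  rw [← hsplit, setIntegral_union (Ioc_disjoint_Ioi le_rfl) measurableSet_Ioi
    (integrable_u c).integrableOn (integrable_u c).integrableOn]
  have h1 : ∫ x in Ioc (0:ℝ) c, max (x - c) 0 ^ 2 * stdPDF x = 0 := by
    rw [setIntegral_congr_fun measurableSet_Ioc (g := fun _ => (0:ℝ))
      (fun x hx => by simp [max_eq_right (by linarith [hx.2] : x - c ≤ 0)])]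
    simp
  have h2 : ∫ x in Ioi c, max (x - c) 0 ^ 2 * stdPDF x
      = ∫ x in Ioi c, (x - c) ^ 2 * stdPDF x :=
    setIntegral_congr_fun measurableSet_Ioi
      (fun x hx => by rw [max_eq_left (by linarith [mem_Ioi.mp hx] : 0 ≤ x - c)])
  rw [h1, h2, zero_add]

lemma Fobj_rewrite (δ t τ : ℝ) (hτ : 0 < τ) :
    Fobj δ t τ = τ / 2 * (δ - 1/2) + t / (2 * τ)
      + τ / 2 * ∫ x in Ioi (0:ℝ), max (x - 2/τ) 0 ^ 2 * stdPDF x := by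
  unfold Fobj
  rw [T_eq (by positivity : (0:ℝ) < 2/τ)]

lemma Fobj_lt_right {δ t τ1 τ2 : ℝ} (h1 : 0 < τ1) (h12 : τ1 < τ2)
    (hkey : t / (τ1 * τ2) < (δ - 1/2) + ∫ x in Ioi (2/τ1), (x ^ 2 - (2/τ1) ^ 2) * stdPDF x) :
    Fobj δ t τ1 < Fobj δ t τ2 := by
  have h2 : 0 < τ2 := h1.trans h12
  set c1 := 2/τ1 with hc1def
  set c2 := 2/τ2 with hc2def
  have hc1 : 0 < c1 := by positivity
  have hc2 : 0 < c2 := by positivity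
  have hc21 : c2 < c1 := div_lt_div_of_pos_left (by norm_num) h1 h12
  have hexpand : ∀ x : ℝ, τ2/2 * (x - c2) ^ 2 - τ1/2 * (x - c1) ^ 2
      = (τ2 - τ1) * x ^ 2 / 2 + c2 - c1 := by
    intro x
    rw [hc1def, hc2def]
    field_simp
    ring
  have h5 : 0 ≤ (τ2 - τ1) * c1 ^ 2 / 2 + c2 - c1 := by
    have he : (τ2 - τ1) * c1 ^ 2 / 2 + c2 - c1 = 2 * (τ2 - τ1) ^ 2 / (τ1 ^ 2 * τ2) := by
      rw [hc1def, hc2def]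
      field_simp
      ring
    rw [he]
    positivity
  set d : ℝ → ℝ := fun x => τ2/2 * (max (x - c2) 0 ^ 2 * stdPDF x)
      - τ1/2 * (max (x - c1) 0 ^ 2 * stdPDF x) with hd
  have hdint : Integrable d := ((integrable_u c2).const_mul _).sub ((integrable_u c1).const_mul _)
  have hdnonneg : ∀ x, 0 ≤ d x := by
    intro x
    rw [hd]
    dsimp only
    rcases le_or_gt x c1 with hx | hx
    · rw [max_eq_right (by linarith : x - c1 ≤ 0)]
      have : (0:ℝ) ≤ τ2/2 * (max (x - c2) 0 ^ 2 * stdPDF x) :=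
        mul_nonneg (by positivity) (mul_nonneg (by positivity) (stdPDF_nonneg x))
      simpa using this
    · rw [max_eq_left (by linarith : 0 ≤ x - c1), max_eq_left (by linarith : 0 ≤ x - c2)]
      have hx2 : c1 ^ 2 ≤ x ^ 2 := pow_le_pow_left₀ hc1.le hx.le 2
      have hb : τ1/2 * (x - c1) ^ 2 ≤ τ2/2 * (x - c2) ^ 2 := by
        have hm := mul_le_mul_of_nonneg_left hx2 (sub_nonneg.2 h12.le)
        have := hexpand x
        linarith
      have := mul_le_mul_of_nonneg_right hb (stdPDF_nonneg x)
      nlinarith [this]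
  have key2 : ∫ x in Ioi c1, (τ2 - τ1)/2 * ((x ^ 2 - c1 ^ 2) * stdPDF x) ≤ ∫ x in Ioi c1, d x := by
    apply setIntegral_mono_on (((integrable_sq_sub c1).const_mul _).integrableOn)
      hdint.integrableOn measurableSet_Ioi
    intro x hx
    have hx' : c1 < x := hx
    rw [hd]
    dsimp only
    rw [max_eq_left (by linarith : 0 ≤ x - c1), max_eq_left (by linarith : 0 ≤ x - c2)]
    have hb : (τ2 - τ1)/2 * (x ^ 2 - c1 ^ 2) ≤ τ2/2 * (x - c2) ^ 2 - τ1/2 * (x - c1) ^ 2 := by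
      have := hexpand x
      linarith
    have := mul_le_mul_of_nonneg_right hb (stdPDF_nonneg x)
    nlinarith [this]
  have key1 : ∫ x in Ioi c1, d x ≤ ∫ x in Ioi (0:ℝ), d x :=
    setIntegral_mono_set hdint.integrableOn (ae_of_all _ hdnonneg)
      ((Ioi_subset_Ioi hc1.le).eventuallyLE)
  have hW : ∫ x in Ioi c1, (τ2 - τ1)/2 * ((x ^ 2 - c1 ^ 2) * stdPDF x)
      = (τ2 - τ1)/2 * ∫ x in Ioi c1, (x ^ 2 - c1 ^ 2) * stdPDF x := integral_const_mul _ _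
  have hsplit : ∫ x in Ioi (0:ℝ), d x
      = τ2/2 * (∫ x in Ioi (0:ℝ), max (x - c2) 0 ^ 2 * stdPDF x)
        - τ1/2 * (∫ x in Ioi (0:ℝ), max (x - c1) 0 ^ 2 * stdPDF x) := by
    rw [hd]
    rw [MeasureTheory.integral_sub (((integrable_u c2).const_mul _).integrableOn)
      (((integrable_u c1).const_mul _).integrableOn), integral_const_mul, integral_const_mul]
  rw [Fobj_rewrite δ t τ1 h1, Fobj_rewrite δ t τ2 h2, ← hc1def, ← hc2def]
  have hts : t / (2 * τ2) - t / (2 * τ1) = - (τ2 - τ1) * (t / (τ1 * τ2)) / 2 := by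
    field_simp
    ring
  set W := ∫ x in Ioi c1, (x ^ 2 - c1 ^ 2) * stdPDF x with hWdef
  have hcomb : (τ2 - τ1)/2 * W ≤ τ2/2 * (∫ x in Ioi (0:ℝ), max (x - c2) 0 ^ 2 * stdPDF x)
      - τ1/2 * (∫ x in Ioi (0:ℝ), max (x - c1) 0 ^ 2 * stdPDF x) := by
    rw [← hsplit]
    calc (τ2 - τ1)/2 * W = ∫ x in Ioi c1, (τ2 - τ1)/2 * ((x ^ 2 - c1 ^ 2) * stdPDF x) := hW.symm
      _ ≤ ∫ x in Ioi c1, d x := key2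
      _ ≤ ∫ x in Ioi (0:ℝ), d x := key1
  have h12' : 0 < τ2 - τ1 := by linarith
  have hmul := mul_lt_mul_of_pos_left hkey h12'
  linarith [hcomb, hts, hmul]

lemma Fobj_lt_left {δ t τ1 τ2 : ℝ} (h1 : 0 < τ1) (h12 : τ1 < τ2)
    (hkey : (δ - 1/2) + ∫ x in Ioi (2/τ2), x ^ 2 * stdPDF x < t / (τ1 * τ2)) :
    Fobj δ t τ2 < Fobj δ t τ1 := by
  have h2 : 0 < τ2 := h1.trans h12
  set c1 := 2/τ1 with hc1def
  set c2 := 2/τ2 with hc2def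
  have hc1 : 0 < c1 := by positivity
  have hc2 : 0 < c2 := by positivity
  have hc21 : c2 < c1 := div_lt_div_of_pos_left (by norm_num) h1 h12
  have hexpand : ∀ x : ℝ, τ2/2 * (x - c2) ^ 2 - τ1/2 * (x - c1) ^ 2
      = (τ2 - τ1) * x ^ 2 / 2 + c2 - c1 := by
    intro x
    rw [hc1def, hc2def]
    field_simp
    ring
  have hexp2 : ∀ x : ℝ, τ2/2 * (x - c2) ^ 2 - (τ2 - τ1) * x ^ 2 / 2
      = τ1 * x ^ 2 / 2 - 2 * x + c2 := by
    intro x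
    rw [hc2def]
    field_simp
    ring
  set d : ℝ → ℝ := fun x => τ2/2 * (max (x - c2) 0 ^ 2 * stdPDF x)
      - τ1/2 * (max (x - c1) 0 ^ 2 * stdPDF x) with hd
  have hdint : Integrable d := ((integrable_u c2).const_mul _).sub ((integrable_u c1).const_mul _)
  -- split Ioi 0 into Ioc 0 c2 and Ioi c2 : d vanishes on Ioc 0 c2
  have hzero : ∫ x in Ioc (0:ℝ) c2, d x = 0 := by
    rw [setIntegral_congr_fun measurableSet_Ioc (g := fun _ => (0:ℝ)) ?_]
    · simp
    · intro x hx
      rw [hd]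
      dsimp only
      rw [max_eq_right (by linarith [hx.2] : x - c2 ≤ 0),
        max_eq_right (by linarith [hx.2] : x - c1 ≤ 0)]
      simp
  have hsplit0 : ∫ x in Ioi (0:ℝ), d x = ∫ x in Ioi c2, d x := by
    rw [← Ioc_union_Ioi_eq_Ioi hc2.le,
      setIntegral_union (Ioc_disjoint_Ioi le_rfl) measurableSet_Ioi
        hdint.integrableOn hdint.integrableOn, hzero, zero_add]
  have key2 : ∫ x in Ioi c2, d x ≤ ∫ x in Ioi c2, (τ2 - τ1)/2 * (x ^ 2 * stdPDF x) := by
    apply setIntegral_mono_on hdint.integrableOn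
      ((integrable_sq_stdPDF.const_mul _).integrableOn) measurableSet_Ioi
    intro x hx
    have hx' : c2 < x := hx
    rw [hd]
    dsimp only
    rw [max_eq_left (by linarith : 0 ≤ x - c2)]
    rcases le_or_gt x c1 with hxc | hxc
    · rw [max_eq_right (by linarith : x - c1 ≤ 0)]
      have hτ1x : τ1 * x ≤ 2 := by
        rw [hc1def] at hxc
        calc τ1 * x ≤ τ1 * (2/τ1) := by
              exact mul_le_mul_of_nonneg_left hxc h1.le
          _ = 2 := by field_simp
      have hb : τ2/2 * (x - c2) ^ 2 ≤ (τ2 - τ1)/2 * x ^ 2 := by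
        have := hexp2 x
        nlinarith [mul_le_mul_of_nonneg_right hτ1x (by linarith : (0:ℝ) ≤ x/2)]
      have := mul_le_mul_of_nonneg_right hb (stdPDF_nonneg x)
      nlinarith [this]
    · rw [max_eq_left (by linarith : 0 ≤ x - c1)]
      have hb : τ2/2 * (x - c2) ^ 2 - τ1/2 * (x - c1) ^ 2 ≤ (τ2 - τ1)/2 * x ^ 2 := by
        have := hexpand x
        linarith
      have := mul_le_mul_of_nonneg_right hb (stdPDF_nonneg x)
      nlinarith [this]
  have hV : ∫ x in Ioi c2, (τ2 - τ1)/2 * (x ^ 2 * stdPDF x)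
      = (τ2 - τ1)/2 * ∫ x in Ioi c2, x ^ 2 * stdPDF x := integral_const_mul _ _
  have hsplit : ∫ x in Ioi (0:ℝ), d x
      = τ2/2 * (∫ x in Ioi (0:ℝ), max (x - c2) 0 ^ 2 * stdPDF x)
        - τ1/2 * (∫ x in Ioi (0:ℝ), max (x - c1) 0 ^ 2 * stdPDF x) := by
    rw [hd]
    rw [MeasureTheory.integral_sub (((integrable_u c2).const_mul _).integrableOn)
      (((integrable_u c1).const_mul _).integrableOn), integral_const_mul, integral_const_mul]
  rw [Fobj_rewrite δ t τ1 h1, Fobj_rewrite δ t τ2 h2, ← hc1def, ← hc2def]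
  have hts : t / (2 * τ2) - t / (2 * τ1) = - (τ2 - τ1) * (t / (τ1 * τ2)) / 2 := by
    field_simp
    ring
  set V := ∫ x in Ioi c2, x ^ 2 * stdPDF x with hVdef
  have hcomb : τ2/2 * (∫ x in Ioi (0:ℝ), max (x - c2) 0 ^ 2 * stdPDF x)
      - τ1/2 * (∫ x in Ioi (0:ℝ), max (x - c1) 0 ^ 2 * stdPDF x) ≤ (τ2 - τ1)/2 * V := by
    rw [← hsplit]
    calc ∫ x in Ioi (0:ℝ), d x = ∫ x in Ioi c2, d x := hsplit0
      _ ≤ ∫ x in Ioi c2, (τ2 - τ1)/2 * (x ^ 2 * stdPDF x) := key2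
      _ = (τ2 - τ1)/2 * V := hV
  have h12' : 0 < τ2 - τ1 := by linarith
  have hmul := mul_lt_mul_of_pos_left hkey h12'
  linarith [hcomb, hts, hmul]

lemma W_nonneg {c : ℝ} (hc : 0 ≤ c) : 0 ≤ ∫ x in Ioi c, (x ^ 2 - c ^ 2) * stdPDF x := by
  apply setIntegral_nonneg measurableSet_Ioi
  intro x hx
  have hx' : c < x := hx
  have : c ^ 2 ≤ x ^ 2 := by nlinarith
  exact mul_nonneg (by linarith) (stdPDF_nonneg x)

lemma half_split_sq {c : ℝ} (hc : 0 < c) :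
    (∫ x in Ioc (0:ℝ) c, x ^ 2 * stdPDF x) + ∫ x in Ioi c, x ^ 2 * stdPDF x = 1/2 := by
  rw [← integral_Ioi_zero_sq_stdPDF, ← Ioc_union_Ioi_eq_Ioi hc.le,
    setIntegral_union (Ioc_disjoint_Ioi le_rfl) measurableSet_Ioi
      integrable_sq_stdPDF.integrableOn integrable_sq_stdPDF.integrableOn]

lemma half_split_pdf {c : ℝ} (hc : 0 < c) :
    (∫ x in Ioc (0:ℝ) c, stdPDF x) + ∫ x in Ioi c, stdPDF x = 1/2 := by
  rw [← integral_Ioi_zero_stdPDF, ← Ioc_union_Ioi_eq_Ioi hc.le,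
    setIntegral_union (Ioc_disjoint_Ioi le_rfl) measurableSet_Ioi
      integrable_stdPDF.integrableOn integrable_stdPDF.integrableOn]

lemma W_lb {c : ℝ} (hc : 0 < c) :
    1/2 - c ^ 2 / 2 ≤ ∫ x in Ioi c, (x ^ 2 - c ^ 2) * stdPDF x := by
  have hsub : ∫ x in Ioi c, (x ^ 2 - c ^ 2) * stdPDF x
      = (∫ x in Ioi c, x ^ 2 * stdPDF x) - c ^ 2 * ∫ x in Ioi c, stdPDF x := by
    rw [← integral_const_mul, ← MeasureTheory.integral_sub integrable_sq_stdPDF.integrableOn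
      (integrable_stdPDF.const_mul _).integrableOn]
    exact setIntegral_congr_fun measurableSet_Ioi (fun x _ => by ring)
  have hA : ∫ x in Ioc (0:ℝ) c, x ^ 2 * stdPDF x ≤ c ^ 2 * ∫ x in Ioc (0:ℝ) c, stdPDF x := by
    rw [← integral_const_mul]
    apply setIntegral_mono_on integrable_sq_stdPDF.integrableOn
      (integrable_stdPDF.const_mul _).integrableOn measurableSet_Ioc
    intro x hx
    have : x ^ 2 ≤ c ^ 2 := by nlinarith [hx.1, hx.2]
    exact mul_le_mul_of_nonneg_right this (stdPDF_nonneg x)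
  have hB : 0 ≤ ∫ x in Ioc (0:ℝ) c, stdPDF x :=
    setIntegral_nonneg measurableSet_Ioc (fun x _ => stdPDF_nonneg x)
  have h1 := half_split_sq hc
  have h2 := half_split_pdf hc
  have hc2 : (0:ℝ) ≤ c ^ 2 := sq_nonneg c
  have h2' : c ^ 2 * (∫ x in Ioc (0:ℝ) c, stdPDF x) + c ^ 2 * (∫ x in Ioi c, stdPDF x)
      = c ^ 2 / 2 := by rw [← mul_add, h2]; ring
  rw [hsub]
  linarith [hA, h1, h2']

theorem tau_bounds (t δ τt : ℝ) (ht : 0 < t) (hδ : 1 / 2 < δ)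
    (hmem : τt ∈ Set.Ioi (0 : ℝ)) (hmin : IsMinOn (Fobj δ t) (Set.Ioi (0 : ℝ)) τt) :
    Real.sqrt (t / (δ - 1 / 2 + ∫ x in Set.Ioi (2 * Real.sqrt ((δ - 1 / 2) / t)), x ^ 2 * stdPDF x))
      ≤ τt ∧
    τt ≤ min (Real.sqrt (t / (δ - 1 / 2))) (Real.sqrt ((4 + t) / δ)) ∧
    (∫ x in Set.Ioi (2 * Real.sqrt ((δ - 1 / 2) / t)), x ^ 2 * stdPDF x) < 1 / 2 := by
  have hτ : 0 < τt := hmem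
  have ha : 0 < δ - 1 / 2 := by linarith
  have hδ0 : 0 < δ := by linarith
  set a : ℝ := δ - 1 / 2 with hadef
  set b : ℝ := 2 * Real.sqrt (a / t) with hbdef
  have hb : 0 < b := by
    rw [hbdef]; positivity
  set v : ℝ := ∫ x in Set.Ioi b, x ^ 2 * stdPDF x with hvdef
  have hv0 : 0 ≤ v :=
    setIntegral_nonneg measurableSet_Ioi
      (fun x _ => mul_nonneg (sq_nonneg x) (stdPDF_nonneg x))
  -- v < 1/2
  have hvhalf : v < 1/2 := by
    have hpos : 0 < ∫ x in Ioc (0:ℝ) b, x ^ 2 * stdPDF x := by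
      rw [← intervalIntegral.integral_of_le hb.le]
      exact intervalIntegral.intervalIntegral_pos_of_pos_on
        integrable_sq_stdPDF.intervalIntegrable
        (fun x hx => mul_pos (pow_pos hx.1 2) (stdPDF_pos x)) hb
    have hsp := half_split_sq hb
    rw [← hvdef] at hsp
    linarith
  -- upper bound 1 : τt ≤ sqrt (t / a)
  set U1 : ℝ := Real.sqrt (t / a) with hU1def
  have hU1 : 0 < U1 := by rw [hU1def]; positivity
  have hU1sq : U1 * U1 = t / a := Real.mul_self_sqrt (by positivity)
  have hub1 : τt ≤ U1 := by
    by_contra hlt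
    push_neg at hlt
    have hkey : t / (U1 * τt) < (δ - 1/2) + ∫ x in Ioi (2/U1), (x ^ 2 - (2/U1) ^ 2) * stdPDF x := by
      have h1 : t / (U1 * τt) < t / (U1 * U1) :=
        div_lt_div_of_pos_left ht (by positivity) (by nlinarith)
      have h2 : t / (U1 * U1) = a := by
        rw [hU1sq]; field_simp
      have h3 := W_nonneg (by positivity : (0:ℝ) ≤ 2/U1)
      rw [← hadef]
      linarith
    have hcontra := Fobj_lt_right hU1 hlt hkey
    have hge := isMinOn_iff.mp hmin U1 (mem_Ioi.mpr hU1)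
    linarith
  -- upper bound 2 : τt ≤ sqrt ((4+t)/δ)
  set U2 : ℝ := Real.sqrt ((4 + t) / δ) with hU2def
  have hU2 : 0 < U2 := by rw [hU2def]; positivity
  have hU2sq : U2 * U2 = (4 + t) / δ := Real.mul_self_sqrt (by positivity)
  have hub2 : τt ≤ U2 := by
    by_contra hlt
    push_neg at hlt
    have hkey : t / (U2 * τt) < (δ - 1/2) + ∫ x in Ioi (2/U2), (x ^ 2 - (2/U2) ^ 2) * stdPDF x := by
      have h1 : t / (U2 * τt) < t / (U2 * U2) :=
        div_lt_div_of_pos_left ht (by positivity) (by nlinarith)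
      have h2 : t / (U2 * U2) = t * δ / (4 + t) := by
        rw [hU2sq]
        field_simp
      have hC : (2/U2) ^ 2 = 4 * δ / (4 + t) := by
        have h4 : (2/U2) ^ 2 = 4 / (U2 * U2) := by
          field_simp; ring
        rw [h4, hU2sq]
        field_simp
      have h3 := W_lb (by positivity : (0:ℝ) < 2/U2)
      have hBC : t * δ / (4 + t) + (4 * δ / (4 + t)) / 2 < δ := by
        have he : t * δ / (4 + t) + (4 * δ / (4 + t)) / 2 = (t * δ + 2 * δ) / (4 + t) := by
          ring
        rw [he, div_lt_iff₀ (by linarith : (0:ℝ) < 4 + t)]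
        nlinarith
      rw [← hadef]
      linarith [h1, h2, h3, hBC, hC]
    have hcontra := Fobj_lt_right hU2 hlt hkey
    have hge := isMinOn_iff.mp hmin U2 (mem_Ioi.mpr hU2)
    linarith
  -- lower bound
  have hav : 0 < a + v := by linarith
  set L : ℝ := Real.sqrt (t / (a + v)) with hLdef
  have hL : 0 < L := by rw [hLdef]; positivity
  have hLsq : L * L = t / (a + v) := Real.mul_self_sqrt (by positivity)
  have hlb : L ≤ τt := by
    by_contra hlt
    push_neg at hlt
    have h2L : b ≤ 2 / L := by
      have he : 2 / L = 2 * Real.sqrt ((a + v) / t) := by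
        rw [hLdef, div_eq_mul_inv, ← Real.sqrt_inv, inv_div]
      rw [he, hbdef]
      gcongr
      linarith
    have hIv : ∫ x in Ioi (2/L), x ^ 2 * stdPDF x ≤ v := by
      rw [hvdef]
      exact setIntegral_mono_set integrable_sq_stdPDF.integrableOn
        (ae_of_all _ fun x => mul_nonneg (sq_nonneg x) (stdPDF_nonneg x))
        ((Ioi_subset_Ioi h2L).eventuallyLE)
    have hkey : (δ - 1/2) + (∫ x in Ioi (2/L), x ^ 2 * stdPDF x) < t / (τt * L) := by
      have h1 : t / (L * L) < t / (τt * L) :=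
        div_lt_div_of_pos_left ht (by positivity) (by nlinarith)
      have h2 : t / (L * L) = a + v := by
        rw [hLsq]; field_simp
      rw [← hadef]
      linarith
    have hcontra := Fobj_lt_left hτ hlt hkey
    have hge := isMinOn_iff.mp hmin L (mem_Ioi.mpr hL)
    linarith
  exact ⟨hlb, le_min hub1 hub2, hvhalf⟩
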